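/- The pair p(x,y) = x·tan y and q(x,y) = -√(cos²y + x²) on Ω = ℝ × (-π/2, π/2) satisfies the Lagrange system: q_x = -p_y/√(1+p_x²+p_y²) and q_y = p_x/√(1+p_x²+p_y²). Equivalently, q_y = (cos y sin y)/√(cos²y + x²) and -q_x = x/√(cos²y + x²). -/

import Mathlib

noncomputable def pdx {E : Type*} [NormedAddCommGroup E] [NormedSpace ℝ E]
    (f : ℝ × ℝ → E) : ℝ × ℝ → E := fun p => fderiv ℝ f p (1, 0)

noncomputable def pdy {E : Type*} [NormedAddCommGroup E] [NormedSpace ℝ E]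
    (f : ℝ × ℝ → E) : ℝ × ℝ → E := fun p => fderiv ℝ f p (0, 1)

noncomputable def Ec (f g : ℝ × ℝ → ℝ) : ℝ × ℝ → ℝ :=
  fun p => 1 + (pdx f p) ^ 2 + (pdx g p) ^ 2

noncomputable def Fc (f g : ℝ × ℝ → ℝ) : ℝ × ℝ → ℝ :=
  fun p => pdx f p * pdy f p + pdx g p * pdy g p

noncomputable def Gc (f g : ℝ × ℝ → ℝ) : ℝ × ℝ → ℝ :=
  fun p => 1 + (pdy f p) ^ 2 + (pdy g p) ^ 2

noncomputable def om (f g : ℝ × ℝ → ℝ) : ℝ × ℝ → ℝ :=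
  fun p => Real.sqrt (Ec f g p * Gc f g p - (Fc f g p) ^ 2)

noncomputable def Wg (p : ℝ × ℝ → ℝ) : ℝ × ℝ → ℝ :=
  fun v => Real.sqrt (1 + (pdx p v) ^ 2 + (pdy p v) ^ 2)

theorem stmt_11 (p q : ℝ × ℝ → ℝ)
    (hpdef : p = fun v => v.1 * Real.tan v.2)
    (hqdef : q = fun v => -Real.sqrt (Real.cos v.2 ^ 2 + v.1 ^ 2)) :
    ∀ v : ℝ × ℝ, v.2 ∈ Set.Ioo (-(Real.pi / 2)) (Real.pi / 2) →
      pdx q v = -pdy p v / Wg p v ∧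
      pdy q v = pdx p v / Wg p v ∧
      pdy q v = Real.cos v.2 * Real.sin v.2 / Real.sqrt (Real.cos v.2 ^ 2 + v.1 ^ 2) ∧
      -pdx q v = v.1 / Real.sqrt (Real.cos v.2 ^ 2 + v.1 ^ 2) := by
  rintro ⟨x, y⟩ hy
  have hc : 0 < Real.cos y := Real.cos_pos_of_mem_Ioo hy
  set s : ℝ := Real.cos y ^ 2 + x ^ 2 with hs
  have hspos : 0 < s := by positivity
  have hrs : 0 < Real.sqrt s := Real.sqrt_pos.2 hspos
  -- fderiv of p
  have h1 : HasFDerivAt (fun v : ℝ × ℝ => v.1) (ContinuousLinearMap.fst ℝ ℝ ℝ) (x, y) :=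
    hasFDerivAt_fst
  have h2 : HasFDerivAt (fun v : ℝ × ℝ => Real.tan v.2)
      ((1 / Real.cos y ^ 2) • ContinuousLinearMap.snd ℝ ℝ ℝ) (x, y) :=
    (Real.hasDerivAt_tan hc.ne').comp_hasFDerivAt (f := Prod.snd) (x, y) hasFDerivAt_snd
  have hp : HasFDerivAt p
      ((x, y).1 • ((1 / Real.cos y ^ 2) • ContinuousLinearMap.snd ℝ ℝ ℝ)
        + Real.tan (x, y).2 • ContinuousLinearMap.fst ℝ ℝ ℝ) (x, y) := by
    rw [hpdef]; exact h1.mul h2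
  have hpx : pdx p (x, y) = Real.tan y := by
    rw [pdx, hp.fderiv]; simp
  have hpy : pdy p (x, y) = x / Real.cos y ^ 2 := by
    rw [pdy, hp.fderiv]; simp [div_eq_mul_inv]
  -- fderiv of q
  have hA : HasFDerivAt (fun v : ℝ × ℝ => Real.cos v.2 ^ 2)
      ((2 * Real.cos y * -Real.sin y) • ContinuousLinearMap.snd ℝ ℝ ℝ) (x, y) := by
    have hcos2 : HasDerivAt (fun t : ℝ => Real.cos t ^ 2)
        (2 * Real.cos y * -Real.sin y) y := by
      have h := (Real.hasDerivAt_cos y).mul (Real.hasDerivAt_cos y)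
      have heq : (fun t : ℝ => Real.cos t * Real.cos t) = fun t : ℝ => Real.cos t ^ 2 := by
        funext t; ring
      rw [show (Real.cos * Real.cos) = fun t : ℝ => Real.cos t ^ 2 from heq] at h
      exact h.congr_deriv (by ring)
    exact hcos2.comp_hasFDerivAt (f := Prod.snd) (x, y) hasFDerivAt_snd
  have hB : HasFDerivAt (fun v : ℝ × ℝ => v.1 ^ 2)
      ((2 * x) • ContinuousLinearMap.fst ℝ ℝ ℝ) (x, y) := by
    have hpow : HasDerivAt (fun t : ℝ => t ^ 2) (2 * x) x := by
      simpa using hasDerivAt_pow 2 x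
    exact hpow.comp_hasFDerivAt (f := Prod.fst) (x, y) hasFDerivAt_fst
  have hq : HasFDerivAt q
      (-((1 / (2 * Real.sqrt s)) •
        ((2 * Real.cos y * -Real.sin y) • ContinuousLinearMap.snd ℝ ℝ ℝ
          + (2 * x) • ContinuousLinearMap.fst ℝ ℝ ℝ))) (x, y) := by
    rw [hqdef]
    exact (((Real.hasDerivAt_sqrt hspos.ne').comp_hasFDerivAt (x, y) (hA.add hB))).neg
  have hqx : pdx q (x, y) = -(x / Real.sqrt s) := by
    rw [pdx, hq.fderiv]; simp; field_simp
  have hqy : pdy q (x, y) = Real.cos y * Real.sin y / Real.sqrt s := by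
    rw [pdy, hq.fderiv]; simp; field_simp
  -- W
  have hW : Wg p (x, y) = Real.sqrt s / Real.cos y ^ 2 := by
    rw [Wg, hpx, hpy]
    have : 1 + Real.tan y ^ 2 + (x / Real.cos y ^ 2) ^ 2 = s / (Real.cos y ^ 2) ^ 2 := by
      rw [Real.tan_eq_sin_div_cos]
      field_simp [hs]
      nlinarith [Real.sin_sq_add_cos_sq y]
    rw [this, Real.sqrt_div hspos.le, Real.sqrt_sq (by positivity)]
  refine ⟨?_, ?_, ?_, ?_⟩
  · rw [hqx, hpy, hW]
    field_simp
  · rw [hqy, hpx, hW, Real.tan_eq_sin_div_cos]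
    field_simp
  · exact hqy
  · rw [hqx]; ring
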